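/- Let p be a prime, let 1 → A → B → C → 1 be a short exact sequence of groups, fix integers i ≥ 0 and j ≥ 0, and let 𝓣 be a set of subgroups of B which is directed by reverse inclusion (for U₁, U₂ ∈ 𝓣 there is U ∈ 𝓣 with U ⊆ U₁ ∩ U₂). For U ∈ 𝓣 set M_U = H_j(U∩A;F_p) and V_U = U/(U∩A); for U₁ ⊆ U₂ in 𝓣 the inclusion U₁ ⊆ U₂ induces a group homomorphism V_{U₁} → V_{U₂} and a compatible map of coefficients M_{U₁} → M_{U₂}, hence transition maps H_i(V_{U₁}; M_{U₁}) → H_i(V_{U₂}; M_{U₂}). Suppose each M_U is finite and the inverse limit of the system (M_U)_{U∈𝓣} is zero. Then the inverse limit of the system (H_i(V_U; M_U))_{U∈𝓣} is zero. -/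

import Mathlib

/-! Inhomogeneous chains computing group homology, with coefficients either in the
trivial module `F_p` or in an abelian group `M` equipped with a `G`-action
`ρ : G →* AddAut M`.  `C_n(G;M) = (Fin n → G) →₀ M` and
`d(g₁,…,g_{n+1}; m) = (g₂,…,g_{n+1}; ρ(g₁)⁻¹m)
  + Σ_j (-1)^{j+1}(g₁,…,g_jg_{j+1},…,g_{n+1}; m) + (-1)^{n+1}(g₁,…,g_n; m)`. -/

/-- The differential on inhomogeneous chains computing `H_*(G;F_p)` with trivial
coefficients. -/
noncomputable def chainsD (p : ℕ) (G : Type*) [Group G] (n : ℕ) :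
    ((Fin (n + 1) → G) →₀ ZMod p) →ₗ[ZMod p] ((Fin n → G) →₀ ZMod p) :=
  Finsupp.lsum (ZMod p) fun g =>
    LinearMap.toSpanSingleton (ZMod p) _
      (Finsupp.single (fun i => g i.succ) 1 +
        Finset.univ.sum fun j : Fin (n + 1) =>
          (-1 : ZMod p) ^ ((j : ℕ) + 1) •
            Finsupp.single (Fin.contractNth j (· * ·) g) (1 : ZMod p))

/-- The `n`-cycles (with trivial coefficients `F_p`); in degree `0` everything is a
cycle. -/
noncomputable def cyclesAt (p : ℕ) (G : Type*) [Group G] :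
    (n : ℕ) → Submodule (ZMod p) ((Fin n → G) →₀ ZMod p)
  | 0 => ⊤
  | n + 1 => LinearMap.ker (chainsD p G n)

/-- The `n`-boundaries, as a submodule of the `n`-cycles. -/
noncomputable def boundariesIn (p : ℕ) (G : Type*) [Group G] (n : ℕ) :
    Submodule (ZMod p) ↥(cyclesAt p G n) :=
  (LinearMap.range (chainsD p G n)).comap (cyclesAt p G n).subtype

/-- The group homology `H_n(G;F_p)` (trivial coefficients), as cycles modulo
boundaries. -/
noncomputable abbrev Hgrp (p : ℕ) (G : Type*) [Group G] (n : ℕ) :=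
  ↥(cyclesAt p G n) ⧸ boundariesIn p G n

/-- The multiplicative group structure on `AddAut M` of the older Mathlib (composition,
`e₁ * e₂ = e₂.trans e₁`, unit `refl`, inverse `symm`), which Mathlib has since replaced by an
additive group structure. -/
instance addAutGroupOld (M : Type*) [Add M] : Group (AddAut M) where
  mul g h := AddEquiv.trans h g
  one := AddEquiv.refl _
  inv := AddEquiv.symm
  mul_assoc _ _ _ := rfl
  one_mul _ := rfl
  mul_one _ := rfl
  inv_mul_cancel := AddEquiv.self_trans_symm

/-- The differential on inhomogeneous chains with coefficients in `M`, for the action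
`ρ : G →* AddAut M`. -/
noncomputable def chainsDAct {G M : Type*} [Group G] [AddCommGroup M]
    (ρ : G →* AddAut M) (n : ℕ) (x : (Fin (n + 1) → G) →₀ M) : (Fin n → G) →₀ M :=
  x.sum fun g m =>
    Finsupp.single (fun i => g i.succ) ((ρ (g 0))⁻¹ m) +
      Finset.univ.sum fun j : Fin (n + 1) =>
        ((-1 : ℤ) ^ ((j : ℕ) + 1)) • Finsupp.single (Fin.contractNth j (· * ·) g) m

/-- The property of being an `n`-cycle (with coefficients in `(M, ρ)`); in degree `0`
everything is a cycle. -/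
def IsCycleAct {G M : Type*} [Group G] [AddCommGroup M] (ρ : G →* AddAut M) :
    (n : ℕ) → ((Fin n → G) →₀ M) → Prop
  | 0, _ => True
  | n + 1, x => chainsDAct ρ n x = 0

/-- The map on chains induced by a group homomorphism `φ : G →* G'` and a compatible map
of coefficients `f : M →+ M'`. -/
noncomputable def chainMapAct {G G' M M' : Type*} [Group G] [Group G']
    [AddCommGroup M] [AddCommGroup M'] (φ : G →* G') (f : M →+ M') (n : ℕ)
    (x : (Fin n → G) →₀ M) : (Fin n → G') →₀ M' :=
  Finsupp.mapDomain (fun v => φ ∘ v) (Finsupp.mapRange f f.map_zero x)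

/-- The map on chains with trivial coefficients `F_p` induced by `φ : G →* G'`. -/
noncomputable def chainMapTriv (p : ℕ) {G G' : Type*} [Group G] [Group G']
    (φ : G →* G') (n : ℕ) (x : (Fin n → G) →₀ ZMod p) : (Fin n → G') →₀ ZMod p :=
  Finsupp.mapDomain (fun v => φ ∘ v) x

/-- Conjugation by `u ∈ U` on `A ⊓ U` (for `A` normal in `B`). -/
def conjHom {B : Type*} [Group B] {A U : Subgroup B} (hA : A.Normal) (u : U) :
    ↥(A ⊓ U) →* ↥(A ⊓ U) :=
  MonoidHom.mk' (fun x => ⟨(u : B) * x * (u : B)⁻¹,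
      Subgroup.mem_inf.2 ⟨hA.conj_mem _ (Subgroup.mem_inf.1 x.2).1 _,
        Subgroup.mul_mem _ (Subgroup.mul_mem _ u.2 (Subgroup.mem_inf.1 x.2).2)
          (Subgroup.inv_mem _ u.2)⟩⟩)
    (fun x y => by ext; simp [mul_assoc])

/-- The homomorphism `U₁/(U₁ ∩ A) → U₂/(U₂ ∩ A)` induced by an inclusion `U₁ ≤ U₂`. -/
noncomputable def quotMapOf {B : Type*} [Group B] {A U₁ U₂ : Subgroup B}
    (hA : A.Normal) (h : U₁ ≤ U₂) :
    (↥U₁ ⧸ A.subgroupOf U₁) →* (↥U₂ ⧸ A.subgroupOf U₂) :=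
  QuotientGroup.map _ _ (Subgroup.inclusion h) (by
    intro x hx
    simpa [Subgroup.mem_comap, Subgroup.mem_subgroupOf] using hx)


section AuxLemmas

lemma contract_comp {G G' : Type*} [Group G] [Group G'] (φ : G →* G') {n : ℕ}
    (j : Fin (n+1)) (g : Fin (n+1) → G) :
    (⇑φ ∘ Fin.contractNth j (· * ·) g) = Fin.contractNth j (· * ·) (⇑φ ∘ g) := by
  funext k
  simp only [Function.comp_apply, Fin.contractNth]
  split_ifs <;> simp [map_mul]

lemma chainsD_map (p : ℕ) {G G' : Type*} [Group G] [Group G'] (φ : G →* G') (n : ℕ)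
    (z : (Fin (n+1) → G) →₀ ZMod p) :
    chainsD p G' n (chainMapTriv p φ (n+1) z)
      = chainMapTriv p φ n (chainsD p G n z) := by
  unfold chainMapTriv
  induction z using Finsupp.induction_linear with
  | zero => simp
  | add a b ha hb => rw [Finsupp.mapDomain_add, map_add, map_add, Finsupp.mapDomain_add, ha, hb]
  | single g c =>
      rw [Finsupp.mapDomain_single]
      rw [chainsD, chainsD, Finsupp.lsum_single, Finsupp.lsum_single,
        LinearMap.toSpanSingleton_apply, LinearMap.toSpanSingleton_apply,
        Finsupp.mapDomain_smul, Finsupp.mapDomain_add, Finsupp.mapDomain_single,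
        Finsupp.mapDomain_finset_sum]
      congr 2
      exact (Finset.sum_congr rfl fun j _ => by
        rw [Finsupp.mapDomain_smul, Finsupp.mapDomain_single, contract_comp]).symm

lemma cyclesAt_map (p : ℕ) {G G' : Type*} [Group G] [Group G'] (φ : G →* G') (n : ℕ)
    {z : (Fin n → G) →₀ ZMod p} (hz : z ∈ cyclesAt p G n) :
    chainMapTriv p φ n z ∈ cyclesAt p G' n := by
  cases n with
  | zero => exact Submodule.mem_top
  | succ n =>
      have hz' : chainsD p G n z = 0 := hz
      show chainsD p G' n _ = 0
      rw [chainsD_map, hz', chainMapTriv, Finsupp.mapDomain_zero]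

/-- `chainsDAct` as an additive homomorphism. -/
noncomputable def chainsDActHom {G M : Type*} [Group G] [AddCommGroup M]
    (ρ : G →* AddAut M) (n : ℕ) : ((Fin (n + 1) → G) →₀ M) →+ ((Fin n → G) →₀ M) :=
  AddMonoidHom.mk' (chainsDAct ρ n) (by
    intro x y
    unfold chainsDAct
    rw [Finsupp.sum_add_index']
    · intro g; simp
    · intro g m₁ m₂
      simp only [map_add, Finsupp.single_add, smul_add, Finset.sum_add_distrib]
      abel)

lemma chainsDAct_neg {G M : Type*} [Group G] [AddCommGroup M]
    (ρ : G →* AddAut M) (n : ℕ) (w : (Fin (n + 1) → G) →₀ M) :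
    chainsDAct ρ n (-w) = - chainsDAct ρ n w :=
  map_neg (chainsDActHom ρ n) w

end AuxLemmas

open CategoryTheory in

/-- Abstract key lemma: for a downward-directed system of finite abelian groups whose
inverse limit vanishes, the transition maps are eventually zero. -/
lemma eventually_zero_of_lim_zero {ι : Type*} [Preorder ι]
    (hdir : ∀ a b : ι, ∃ c, c ≤ a ∧ c ≤ b)
    (M : ι → Type*) [∀ i, AddCommGroup (M i)] [∀ i, Finite (M i)]
    (F : ∀ a b : ι, a ≤ b → (M a →+ M b))
    (hFid : ∀ a (x : M a), F a a le_rfl x = x)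
    (hFcomp : ∀ a b c (hab : a ≤ b) (hbc : b ≤ c) (x : M a),
      F b c hbc (F a b hab x) = F a c (hab.trans hbc) x)
    (hlim : ∀ fam : ∀ i, M i, (∀ a b (h : a ≤ b), F a b h (fam a) = fam b) →
      ∀ i, fam i = 0)
    (i₀ : ι) : ∃ b, ∃ h : b ≤ i₀, ∀ x, F b i₀ h x = 0 := by
  classical
  by_contra hcon
  push_neg at hcon
  -- the index type below `i₀`
  let T : Type _ := {a : ι // a ≤ i₀}
  let I : T → Set (M i₀) := fun a => Set.range (F a.1 i₀ a.2)
  -- choose an image of minimal cardinality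
  have hrne : (Set.range fun a : T => (I a).ncard).Nonempty :=
    ⟨_, ⟨⟨i₀, le_rfl⟩, rfl⟩⟩
  obtain ⟨am, ham⟩ := Nat.sInf_mem hrne
  have hmin : ∀ a : T, (I am).ncard ≤ (I a).ncard :=
    fun a => le_of_eq_of_le ham (Nat.sInf_le ⟨a, rfl⟩)
  -- the minimal image is contained in all images
  have hsub : ∀ a : T, I am ⊆ I a := by
    intro a
    obtain ⟨c, hc₁, hc₂⟩ := hdir a.1 am.1
    have h1 : I ⟨c, hc₁.trans a.2⟩ ⊆ I am := by
      rintro y ⟨m, rfl⟩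
      exact ⟨F c am.1 hc₂ m, hFcomp c am.1 i₀ hc₂ am.2 m⟩
    have h2 : I ⟨c, hc₁.trans a.2⟩ ⊆ I a := by
      rintro y ⟨m, rfl⟩
      exact ⟨F c a.1 hc₁ m, hFcomp c a.1 i₀ hc₁ a.2 m⟩
    have heq : I ⟨c, hc₁.trans a.2⟩ = I am :=
      Set.eq_of_subset_of_ncard_le h1 (hmin _)
        (Set.Finite.subset Set.finite_univ (Set.subset_univ _))
    rw [← heq]
    exact h2
  obtain ⟨m0, hm0⟩ := hcon am.1 am.2
  have hx : ∀ a : T, F am.1 i₀ am.2 m0 ∈ I a := fun a => hsub a ⟨m0, rfl⟩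
  -- the cofiltered system of preimages
  haveI : IsCofilteredOrEmpty T := by
    constructor
    · intro X Y
      obtain ⟨c, hc₁, hc₂⟩ := hdir X.1 Y.1
      exact ⟨⟨c, hc₁.trans X.2⟩, homOfLE hc₁, homOfLE hc₂, trivial⟩
    · intro X Y g h
      exact ⟨X, homOfLE (le_refl X), Subsingleton.elim _ _⟩
  let G : T ⥤ Type _ :=
    { obj := fun a => {y : M a.1 // F a.1 i₀ a.2 y = F am.1 i₀ am.2 m0}
      map := fun {a b} h => TypeCat.ofHom fun y => ⟨F a.1 b.1 (leOfHom h) y.1, by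
        rw [hFcomp]; exact y.2⟩
      map_id := fun a => by ext y; exact (hFid a.1 y.1)
      map_comp := fun {a b c} g h => by
        ext y; exact
          (hFcomp a.1 b.1 c.1 (leOfHom g) (leOfHom h) y.1).symm }
  haveI : ∀ a : T, Finite (G.obj a) := fun a => Subtype.finite
  haveI : ∀ a : T, Nonempty (G.obj a) := by
    intro a
    obtain ⟨m, hm⟩ := hx a
    exact ⟨⟨m, hm⟩⟩
  obtain ⟨s, hs⟩ := nonempty_sections_of_finite_cofiltered_system G
  have hsval : ∀ (a b : T) (h : a ≤ b), F a.1 b.1 h (s a).1 = (s b).1 :=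
    fun a b h => congrArg Subtype.val (hs (homOfLE h))
  -- build a compatible family through the chosen nonzero element
  have hpick : ∀ i : ι, ∃ a : T, a.1 ≤ i := by
    intro i
    obtain ⟨c, hc₁, hc₂⟩ := hdir i i₀
    exact ⟨⟨c, hc₂⟩, hc₁⟩
  let pk : ι → T := fun i => (hpick i).choose
  have hpk : ∀ i : ι, (pk i).1 ≤ i := fun i => (hpick i).choose_spec
  let fam : ∀ i, M i := fun i => F (pk i).1 i (hpk i) (s (pk i)).1
  have hwd : ∀ (i : ι) (a : T) (h : a.1 ≤ i), F a.1 i h (s a).1 = fam i := by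
    intro i a h
    show F a.1 i h (s a).1 = F (pk i).1 i (hpk i) (s (pk i)).1
    obtain ⟨c, hc₁, hc₂⟩ := hdir a.1 (pk i).1
    have h1 : (⟨c, hc₁.trans a.2⟩ : T) ≤ a := hc₁
    have h2 : (⟨c, hc₁.trans a.2⟩ : T) ≤ pk i := hc₂
    rw [← hsval _ a h1, ← hsval _ (pk i) h2, hFcomp, hFcomp]
  have hcompat : ∀ a b (h : a ≤ b), F a b h (fam a) = fam b := by
    intro a b h
    show F a b h (F (pk a).1 a (hpk a) (s (pk a)).1) = fam b
    rw [hFcomp]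
    exact hwd b (pk a) ((hpk a).trans h)
  have h0 := hlim fam hcompat i₀
  have hx0 : fam i₀ = F am.1 i₀ am.2 m0 := by
    rw [← hwd i₀ am am.2]
    exact (s am).2
  rw [hx0] at h0
  exact hm0 h0


/-- Let `p` be a prime, `1 → A → B → C → 1` a short exact sequence of
groups, `i, j ≥ 0`, and `𝓣` a set of subgroups of `B` directed by reverse inclusion.
For `U ∈ 𝓣` set `M_U = H_j(U∩A;F_p)` and `V_U = U/(U∩A)`, with `V_U` acting on `M_U`
via conjugation (the action `ρ`, characterised on representing cycles), and with
transition maps `f : M_{U₁} →+ M_{U₂}` (for `U₁ ⊆ U₂`) induced by the inclusions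
(characterised on representing cycles).  Suppose each `M_U` is finite and the inverse
limit of the system `(M_U)` is zero.  Then the inverse limit of the system
`(H_i(V_U; M_U))` is zero: any family of `i`-cycles `z_U` (over `V_U`, with coefficients
`M_U`) which is compatible up to boundaries under the induced chain maps consists of
boundaries. -/
theorem stmt_13 (p : ℕ) (hp : p.Prime) (B C : Type*) [Group B] [Group C]
    (A : Subgroup B) (hA : A.Normal) (π : B →* C) (hπ : Function.Surjective π)
    (hker : π.ker = A) (i j : ℕ) (𝓣 : Set (Subgroup B))
    (hdir : ∀ U₁ ∈ 𝓣, ∀ U₂ ∈ 𝓣, ∃ U ∈ 𝓣, U ≤ U₁ ⊓ U₂)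
    (hfin : ∀ U ∈ 𝓣, Finite (Hgrp p ↥(A ⊓ U) j))
    -- the conjugation action of `V_U = U/(U∩A)` on `M_U = H_j(U∩A;F_p)`:
    (ρ : ∀ U ∈ 𝓣, (↥U ⧸ A.subgroupOf U) →* AddAut (Hgrp p ↥(A ⊓ U) j))
    (hρ : ∀ (U : Subgroup B) (hU : U ∈ 𝓣) (u : U)
      (z z' : (Fin j → ↥(A ⊓ U)) →₀ ZMod p)
      (hz : z ∈ cyclesAt p ↥(A ⊓ U) j) (hz' : z' ∈ cyclesAt p ↥(A ⊓ U) j),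
      chainMapTriv p (conjHom hA u) j z = z' →
        ρ U hU (QuotientGroup.mk u) (Submodule.Quotient.mk ⟨z, hz⟩) =
          Submodule.Quotient.mk ⟨z', hz'⟩)
    -- the transition maps `M_{U₁} →+ M_{U₂}` induced by the inclusions `U₁ ∩ A ≤ U₂ ∩ A`:
    (f : ∀ (U₁ : Subgroup B), U₁ ∈ 𝓣 → ∀ (U₂ : Subgroup B), U₂ ∈ 𝓣 → U₁ ≤ U₂ →
      (Hgrp p ↥(A ⊓ U₁) j →+ Hgrp p ↥(A ⊓ U₂) j))
    (hf : ∀ (U₁ : Subgroup B) (h₁ : U₁ ∈ 𝓣) (U₂ : Subgroup B) (h₂ : U₂ ∈ 𝓣)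
      (hle : U₁ ≤ U₂) (z : (Fin j → ↥(A ⊓ U₁)) →₀ ZMod p)
      (z' : (Fin j → ↥(A ⊓ U₂)) →₀ ZMod p)
      (hz : z ∈ cyclesAt p ↥(A ⊓ U₁) j) (hz' : z' ∈ cyclesAt p ↥(A ⊓ U₂) j),
      chainMapTriv p (Subgroup.inclusion (inf_le_inf_left A hle)) j z = z' →
        f U₁ h₁ U₂ h₂ hle (Submodule.Quotient.mk ⟨z, hz⟩) =
          Submodule.Quotient.mk ⟨z', hz'⟩)
    -- hypothesis: the inverse limit of the system `(M_U)` vanishes: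
    (hlim : ∀ mfam : ∀ U ∈ 𝓣, Hgrp p ↥(A ⊓ U) j,
      (∀ (U₁ : Subgroup B) (h₁ : U₁ ∈ 𝓣) (U₂ : Subgroup B) (h₂ : U₂ ∈ 𝓣)
        (hle : U₁ ≤ U₂), f U₁ h₁ U₂ h₂ hle (mfam U₁ h₁) = mfam U₂ h₂) →
      ∀ (U : Subgroup B) (hU : U ∈ 𝓣), mfam U hU = 0) :
    -- conclusion: the inverse limit of the system `(H_i(V_U;M_U))` vanishes:
    ∀ zfam : ∀ U ∈ 𝓣, (Fin i → ↥U ⧸ A.subgroupOf U) →₀ Hgrp p ↥(A ⊓ U) j,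
      (∀ (U : Subgroup B) (hU : U ∈ 𝓣), IsCycleAct (ρ U hU) i (zfam U hU)) →
      (∀ (U₁ : Subgroup B) (h₁ : U₁ ∈ 𝓣) (U₂ : Subgroup B) (h₂ : U₂ ∈ 𝓣)
        (hle : U₁ ≤ U₂),
        ∃ w : (Fin (i + 1) → ↥U₂ ⧸ A.subgroupOf U₂) →₀ Hgrp p ↥(A ⊓ U₂) j,
          chainMapAct (quotMapOf hA hle) (f U₁ h₁ U₂ h₂ hle) i (zfam U₁ h₁) -
            zfam U₂ h₂ = chainsDAct (ρ U₂ h₂) i w) →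
      ∀ (U : Subgroup B) (hU : U ∈ 𝓣),
        ∃ w : (Fin (i + 1) → ↥U ⧸ A.subgroupOf U) →₀ Hgrp p ↥(A ⊓ U) j,
          zfam U hU = chainsDAct (ρ U hU) i w := by
  classical
  -- the transition map for `U ≤ U` is the identity
  have hid : ∀ (U : Subgroup B) (hU : U ∈ 𝓣) (m : Hgrp p ↥(A ⊓ U) j),
      f U hU U hU le_rfl m = m := by
    intro U hU m
    obtain ⟨⟨z, hz⟩, rfl⟩ := Submodule.Quotient.mk_surjective _ m
    refine hf U hU U hU le_rfl z z hz hz ?_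
    have he : (fun v : Fin j → ↥(A ⊓ U) =>
        ⇑(Subgroup.inclusion (inf_le_inf_left A (le_refl U))) ∘ v) = id := by
      funext v
      funext k
      exact Subtype.ext rfl
    rw [chainMapTriv, he, Finsupp.mapDomain_id]
  -- functoriality of the transition maps
  have hcomp : ∀ (U₁ : Subgroup B) (h₁ : U₁ ∈ 𝓣) (U₂ : Subgroup B) (h₂ : U₂ ∈ 𝓣)
      (U₃ : Subgroup B) (h₃ : U₃ ∈ 𝓣) (a : U₁ ≤ U₂) (b : U₂ ≤ U₃)
      (m : Hgrp p ↥(A ⊓ U₁) j),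
      f U₂ h₂ U₃ h₃ b (f U₁ h₁ U₂ h₂ a m) = f U₁ h₁ U₃ h₃ (a.trans b) m := by
    intro U₁ h₁ U₂ h₂ U₃ h₃ a b m
    obtain ⟨⟨z, hz⟩, rfl⟩ := Submodule.Quotient.mk_surjective _ m
    have hz₁ := cyclesAt_map p (Subgroup.inclusion (inf_le_inf_left A a)) j hz
    have hz₂ := cyclesAt_map p (Subgroup.inclusion (inf_le_inf_left A b)) j hz₁
    rw [hf U₁ h₁ U₂ h₂ a z _ hz hz₁ rfl, hf U₂ h₂ U₃ h₃ b _ _ hz₁ hz₂ rfl]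
    refine (hf U₁ h₁ U₃ h₃ (a.trans b) z _ hz hz₂ ?_).symm
    rw [chainMapTriv, chainMapTriv, chainMapTriv, ← Finsupp.mapDomain_comp]
    congr 1
  -- key step: transition maps are eventually zero
  have hkill : ∀ (U₀ : Subgroup B) (hU₀ : U₀ ∈ 𝓣), ∃ (W : Subgroup B) (hW : W ∈ 𝓣)
      (hle : W ≤ U₀), ∀ m, f W hW U₀ hU₀ hle m = 0 := by
    intro U₀ hU₀
    haveI : ∀ U : {U : Subgroup B // U ∈ 𝓣}, Finite (Hgrp p ↥(A ⊓ U.1) j) :=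
      fun U => hfin U.1 U.2
    haveI : ∀ U : {U : Subgroup B // U ∈ 𝓣}, AddCommGroup (Hgrp p ↥(A ⊓ U.1) j) :=
      fun U => inferInstance
    obtain ⟨b, h, hz⟩ := @eventually_zero_of_lim_zero
      {U : Subgroup B // U ∈ 𝓣} _
      (fun a b => by
        obtain ⟨W, hW, hle⟩ := hdir a.1 a.2 b.1 b.2
        exact ⟨⟨W, hW⟩, hle.trans inf_le_left, hle.trans inf_le_right⟩)
      (fun U => Hgrp p ↥(A ⊓ U.1) j)
      (fun U => Submodule.Quotient.addCommGroup (boundariesIn p ↥(A ⊓ U.1) j))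
      (fun U => hfin U.1 U.2)
      (fun a b h => f a.1 a.2 b.1 b.2 h)
      (fun a x => hid a.1 a.2 x)
      (fun a b c hab hbc x => hcomp a.1 a.2 b.1 b.2 c.1 c.2 hab hbc x)
      (by
        intro fam hc U
        exact hlim (fun U hU => fam ⟨U, hU⟩)
          (fun U₁ h₁ U₂ h₂ hle => hc ⟨U₁, h₁⟩ ⟨U₂, h₂⟩ hle) U.1 U.2)
      ⟨U₀, hU₀⟩
    exact ⟨b.1, b.2, h, hz⟩
  -- now conclude
  intro zfam hcyc hcompat U hU
  obtain ⟨W, hW, hle, hzero⟩ := hkill U hU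
  obtain ⟨w, hw⟩ := hcompat W hW U hU hle
  have h0 : chainMapAct (quotMapOf hA hle) (f W hW U hU hle) i (zfam W hW) = 0 := by
    rw [chainMapAct]
    have hz0 : Finsupp.mapRange (f W hW U hU hle) (map_zero _) (zfam W hW) = 0 := by
      ext a
      simp [Finsupp.mapRange_apply, hzero]
    rw [hz0, Finsupp.mapDomain_zero]
  rw [h0, zero_sub] at hw
  refine ⟨-w, ?_⟩
  rw [chainsDAct_neg, ← hw, neg_neg]
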